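/- For a positive-definite symmetric matrix A of determinant 1 and X = log A (the symmetric logarithm), the path γ(t) = exp(tX), t ∈ [0,1], satisfies: the Thurston–Finsler length (1/2)∫₀¹ λ_max(γ'(t)γ(t)⁻¹) dt equals (1/2) λ_max(X) = d_Th(I, A), where λ_max denotes the largest eigenvalue. -/

import Mathlib

open Matrix

attribute [local instance] Matrix.frobeniusNormedAddCommGroup Matrix.frobeniusNormedSpace

/-- `d_Th(Y, X) = (1/2) max { log λ : λ eigenvalue of X Y⁻¹ }`. -/
noncomputable def dTh {n : ℕ} (Y X : Matrix (Fin n) (Fin n) ℝ) : ℝ :=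
  (1 / 2) * sSup {r : ℝ | ∃ lam ∈ spectrum ℝ (X * Y⁻¹), r = Real.log lam}

/-- For a positive-definite symmetric matrix `A` of determinant 1 and `X = log A`
symmetric with `exp X = A`, the path `γ(t) = exp (t X)`, `t ∈ [0,1]`, has
Thurston–Finsler length `(1/2) ∫₀¹ λ_max (γ'(t) γ(t)⁻¹) dt` equal to
`(1/2) λ_max X`, which equals the Thurston distance `d_Th(I, A)`. -/
theorem finsler_length_of_exp_path (n : ℕ) (A X : Matrix (Fin n) (Fin n) ℝ)
    (hA : A.PosDef) (hdA : A.det = 1) (hX : X.IsSymm) (hexp : NormedSpace.exp X = A) :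
    (1 / 2) * (∫ t in (0:ℝ)..1, sSup (spectrum ℝ
        ((deriv (fun s : ℝ => NormedSpace.exp (s • X)) t) * (NormedSpace.exp (t • X))⁻¹)))
      = (1 / 2) * sSup (spectrum ℝ X) ∧
    (1 / 2) * sSup (spectrum ℝ X) = dTh 1 A := by
  classical
  letI : NormedRing (Matrix (Fin n) (Fin n) ℝ) := Matrix.frobeniusNormedRing
  letI : NormedAlgebra ℝ (Matrix (Fin n) (Fin n) ℝ) := Matrix.frobeniusNormedAlgebra
  constructor
  · -- the integrand is constantly `sSup (spectrum ℝ X)`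
    have key : ∀ t : ℝ,
        (deriv (fun s : ℝ => NormedSpace.exp (s • X)) t) * (NormedSpace.exp (t • X))⁻¹
          = X := by
      intro t
      have hder : deriv (fun s : ℝ => NormedSpace.exp (s • X)) t
          = X * NormedSpace.exp (t • X) :=
        (hasDerivAt_exp_smul_const' (𝕂 := ℝ) X t).deriv
      have hunit : IsUnit (NormedSpace.exp (t • X)).det :=
        (Matrix.isUnit_iff_isUnit_det _).mp (Matrix.isUnit_exp _)
      rw [hder, Matrix.mul_assoc, Matrix.mul_nonsing_inv _ hunit, Matrix.mul_one]
    have : (∫ t in (0:ℝ)..1, sSup (spectrum ℝ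
        ((deriv (fun s : ℝ => NormedSpace.exp (s • X)) t) * (NormedSpace.exp (t • X))⁻¹)))
        = ∫ _t in (0:ℝ)..1, sSup (spectrum ℝ X) := by
      refine intervalIntegral.integral_congr fun t _ => ?_
      rw [key t]
    rw [this, intervalIntegral.integral_const]
    simp
  · -- the Thurston distance
    have hXh : X.IsHermitian := by
      rwa [Matrix.IsHermitian, Matrix.conjTranspose_eq_transpose_of_trivial]
    have hspecX : spectrum ℝ X = Set.range hXh.eigenvalues :=
      hXh.spectrum_real_eq_range_eigenvalues
    set u : (Matrix (Fin n) (Fin n) ℝ)ˣ := Unitary.toUnits (hXh.eigenvectorUnitary)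
    have hcoe : ((u⁻¹ : (Matrix (Fin n) (Fin n) ℝ)ˣ) : Matrix (Fin n) (Fin n) ℝ)
        = star (hXh.eigenvectorUnitary : Matrix (Fin n) (Fin n) ℝ) := rfl
    have hdecomp : X = (u : Matrix (Fin n) (Fin n) ℝ) * Matrix.diagonal hXh.eigenvalues
        * ((u⁻¹ : (Matrix (Fin n) (Fin n) ℝ)ˣ) : Matrix (Fin n) (Fin n) ℝ) := by
      conv_lhs => rw [hXh.spectral_theorem]
      rw [hcoe]
      norm_num [u]
    have hexpA : NormedSpace.exp X = (u : Matrix (Fin n) (Fin n) ℝ)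
        * NormedSpace.exp (Matrix.diagonal hXh.eigenvalues)
        * ((u⁻¹ : (Matrix (Fin n) (Fin n) ℝ)ˣ) : Matrix (Fin n) (Fin n) ℝ) := by
      conv_lhs => rw [hdecomp]
      exact Matrix.exp_units_conj u _
    have hspecA : spectrum ℝ A = Set.range (fun i => Real.exp (hXh.eigenvalues i)) := by
      rw [← hexp, hexpA, spectrum.units_conjugate,
        Matrix.exp_diagonal, spectrum_diagonal]
      exact congrArg Set.range (funext fun i => by rw [Pi.coe_exp, Real.exp_eq_exp_ℝ])
    have hset : {r : ℝ | ∃ lam ∈ spectrum ℝ (A * (1 : Matrix (Fin n) (Fin n) ℝ)⁻¹),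
        r = Real.log lam} = spectrum ℝ X := by
      rw [inv_one, mul_one, hspecA, hspecX]
      ext r
      constructor
      · rintro ⟨lam, ⟨i, rfl⟩, rfl⟩
        exact ⟨i, (Real.log_exp _).symm⟩
      · rintro ⟨i, rfl⟩
        exact ⟨Real.exp (hXh.eigenvalues i), ⟨i, rfl⟩, (Real.log_exp _).symm⟩
    rw [dTh, hset]
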